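/- Let Ω ⊆ ℝ × ℝ³ be open, L : ℝ³ × ℝ³ → ℝ twice continuously differentiable, and let E, B : Ω → ℝ³ be continuously differentiable fields. Set D(t,x) := ∇_E L(E(t,x), B(t,x)) and H(t,x) := −∇_B L(E(t,x), B(t,x)). Assume on Ω the Gauß–Faraday law ∂_t B + curl_x E = 0, div_x B = 0, and the Maxwell–Ampère law ∂_t D − curl_x H = 0, div_x D = 0. Then the 4×4 tensor T with first row (L − E·D, (H×E)ᵀ), first column below the corner D×B, and lower-right block (L + B·H) I₃ − E ⊗ D − H ⊗ B is divergence-free on Ω: ∂_t(L − E·D) + div_x(H × E) = 0, and for i = 1,2,3, ∂_t (D × B)_i + ∑_{j=1}^3 ∂_j [ (L + B·H) δ_{ij} − E_i D_j − H_i B_j ] = 0. -/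

import Mathlib

open Matrix
open scoped BigOperators

/-- Time partial derivative of a scalar function on spacetime `ℝ × ℝ³`. -/
noncomputable def pt (f : ℝ × (Fin 3 → ℝ) → ℝ) (p : ℝ × (Fin 3 → ℝ)) : ℝ :=
  fderiv ℝ f p (1, 0)

/-- Spatial partial derivative `∂_j` of a scalar function on spacetime `ℝ × ℝ³`. -/
noncomputable def px (j : Fin 3) (f : ℝ × (Fin 3 → ℝ) → ℝ) (p : ℝ × (Fin 3 → ℝ)) : ℝ :=
  fderiv ℝ f p (0, Pi.single j 1)

/-- Spatial curl of a vector field on spacetime. -/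
noncomputable def curl3 (F : ℝ × (Fin 3 → ℝ) → (Fin 3 → ℝ)) (p : ℝ × (Fin 3 → ℝ)) :
    Fin 3 → ℝ :=
  ![px 1 (fun z => F z 2) p - px 2 (fun z => F z 1) p,
    px 2 (fun z => F z 0) p - px 0 (fun z => F z 2) p,
    px 0 (fun z => F z 1) p - px 1 (fun z => F z 0) p]

private lemma fd_mul {f g : ℝ × (Fin 3 → ℝ) → ℝ} {p : ℝ × (Fin 3 → ℝ)}
    (hf : DifferentiableAt ℝ f p) (hg : DifferentiableAt ℝ g p) (v : ℝ × (Fin 3 → ℝ)) :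
    fderiv ℝ (fun z => f z * g z) p v = fderiv ℝ f p v * g p + f p * fderiv ℝ g p v := by
  rw [fderiv_fun_mul hf hg]
  simp only [ContinuousLinearMap.add_apply, ContinuousLinearMap.coe_smul', Pi.smul_apply,
    smul_eq_mul]
  ring

/-- for `C¹` fields satisfying the Gauß–Faraday and Maxwell–Ampère laws, the
electromagnetic tensor `T` (first row `(L − E·D, (H×E)ᵀ)`, first column `D×B`, lower-right
block `(L + B·H)I₃ − E⊗D − H⊗B`) is divergence-free: Poynting's theorem and conservation of
momentum hold. -/
theorem stmt13 (Ω : Set (ℝ × (Fin 3 → ℝ))) (hΩ : IsOpen Ω)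
    (L : (Fin 3 → ℝ) × (Fin 3 → ℝ) → ℝ) (hL : ContDiff ℝ 2 L)
    (E B : ℝ × (Fin 3 → ℝ) → (Fin 3 → ℝ))
    (hE : ContDiffOn ℝ 1 E Ω) (hB : ContDiffOn ℝ 1 B Ω)
    (D H : ℝ × (Fin 3 → ℝ) → (Fin 3 → ℝ))
    (hD : ∀ p i, D p i = fderiv ℝ L (E p, B p) (Pi.single i 1, 0))
    (hH : ∀ p i, H p i = -fderiv ℝ L (E p, B p) (0, Pi.single i 1))
    -- Gauß–Faraday law
    (hGF : ∀ p ∈ Ω, ∀ i, pt (fun z => B z i) p + curl3 E p i = 0)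
    (hdivB : ∀ p ∈ Ω, ∑ j, px j (fun z => B z j) p = 0)
    -- Maxwell–Ampère law
    (hMA : ∀ p ∈ Ω, ∀ i, pt (fun z => D z i) p - curl3 H p i = 0)
    (hdivD : ∀ p ∈ Ω, ∑ j, px j (fun z => D z j) p = 0) :
    -- Poynting's theorem (first row of Div T = 0)
    (∀ p ∈ Ω,
      pt (fun z => L (E z, B z) - E z ⬝ᵥ D z) p
        + ∑ j, px j (fun z => crossProduct (H z) (E z) j) p = 0) ∧
    -- conservation of momentum (spatial rows of Div T = 0)
    (∀ p ∈ Ω, ∀ i : Fin 3,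
      pt (fun z => crossProduct (D z) (B z) i) p
        + ∑ j, px j (fun z =>
            (L (E z, B z) + B z ⬝ᵥ H z) * (if i = j then 1 else 0)
              - E z i * D z j - H z i * B z j) p = 0) := by
  have main : ∀ p ∈ Ω,
      (pt (fun z => L (E z, B z) - E z ⬝ᵥ D z) p
        + ∑ j, px j (fun z => crossProduct (H z) (E z) j) p = 0) ∧
      (∀ i : Fin 3,
        pt (fun z => crossProduct (D z) (B z) i) p
          + ∑ j, px j (fun z =>
              (L (E z, B z) + B z ⬝ᵥ H z) * (if i = j then 1 else 0)
                - E z i * D z j - H z i * B z j) p = 0) := by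
    intro p hp
    have hmem : Ω ∈ nhds p := hΩ.mem_nhds hp
    have hEd : DifferentiableAt ℝ E p := (hE.differentiableOn one_ne_zero).differentiableAt hmem
    have hBd : DifferentiableAt ℝ B p := (hB.differentiableOn one_ne_zero).differentiableAt hmem
    have hEB : DifferentiableAt ℝ (fun z => (E z, B z)) p := hEd.prodMk hBd
    have hLdiff : Differentiable ℝ L := hL.differentiable two_ne_zero
    have hLc : DifferentiableAt ℝ (fun z => L (E z, B z)) p :=
      (hLdiff (E p, B p)).comp p hEB
    have hG : ContDiff ℝ 1 (fderiv ℝ L) := hL.fderiv_right (by norm_num)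
    have hGc : DifferentiableAt ℝ (fun z => fderiv ℝ L (E z, B z)) p :=
      ((hG.differentiable one_ne_zero) (E p, B p)).comp p hEB
    have hDk : ∀ k, DifferentiableAt ℝ (fun z => D z k) p := by
      intro k
      have hfun : (fun z => D z k) = fun z =>
          (ContinuousLinearMap.apply ℝ ℝ ((Pi.single k 1 : Fin 3 → ℝ), (0 : Fin 3 → ℝ)))
            (fderiv ℝ L (E z, B z)) := by
        funext z; rw [hD]; rfl
      rw [hfun]
      exact (ContinuousLinearMap.apply ℝ ℝ _).differentiableAt.comp p hGc
    have hHk : ∀ k, DifferentiableAt ℝ (fun z => H z k) p := by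
      intro k
      have hfun : (fun z => H z k) = fun z =>
          -((ContinuousLinearMap.apply ℝ ℝ ((0 : Fin 3 → ℝ), (Pi.single k 1 : Fin 3 → ℝ)))
            (fderiv ℝ L (E z, B z))) := by
        funext z; rw [hH]; rfl
      rw [hfun]
      exact ((ContinuousLinearMap.apply ℝ ℝ _).differentiableAt.comp p hGc).neg
    have hEkd : ∀ k, DifferentiableAt ℝ (fun z => E z k) p := fun k => differentiableAt_pi.mp hEd k
    have hBkd : ∀ k, DifferentiableAt ℝ (fun z => B z k) p := fun k => differentiableAt_pi.mp hBd k
    -- chain rule for L ∘ (E, B)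
    have hsplit : ∀ u w : Fin 3 → ℝ, (fderiv ℝ L (E p, B p)) (u, w)
        = ∑ k, (u k * D p k - w k * H p k) := by
      intro u w
      have h1 : ((u, w) : (Fin 3 → ℝ) × (Fin 3 → ℝ)) = ∑ k : Fin 3,
          (u k • ((Pi.single k 1 : Fin 3 → ℝ), (0 : Fin 3 → ℝ))
            + w k • ((0 : Fin 3 → ℝ), (Pi.single k 1 : Fin 3 → ℝ))) := by
        ext j <;> fin_cases j <;> simp [Fin.sum_univ_three, Pi.single_apply]
      rw [h1, map_sum]
      refine Finset.sum_congr rfl fun k _ => ?_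
      have h2 : (fderiv ℝ L (E p, B p)) ((Pi.single k 1 : Fin 3 → ℝ), (0 : Fin 3 → ℝ))
          = D p k := (hD p k).symm
      have h3 : (fderiv ℝ L (E p, B p)) ((0 : Fin 3 → ℝ), (Pi.single k 1 : Fin 3 → ℝ))
          = -H p k := by rw [hH p k]; ring
      rw [map_add, (fderiv ℝ L (E p, B p)).map_smul, (fderiv ℝ L (E p, B p)).map_smul,
        h2, h3, smul_eq_mul, smul_eq_mul]
      ring
    have hLder : ∀ v, fderiv ℝ (fun z => L (E z, B z)) p v
        = ∑ k, (fderiv ℝ (fun z => E z k) p v * D p k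
            - fderiv ℝ (fun z => B z k) p v * H p k) := by
      intro v
      have hc : HasFDerivAt (fun z => L (E z, B z))
          ((fderiv ℝ L (E p, B p)).comp ((fderiv ℝ E p).prod (fderiv ℝ B p))) p :=
        (hLdiff (E p, B p)).hasFDerivAt.comp p (hEd.hasFDerivAt.prodMk hBd.hasFDerivAt)
      have hEcomp : ∀ k, fderiv ℝ E p v k = fderiv ℝ (fun z => E z k) p v := by
        intro k
        have h : fderiv ℝ ((⇑(ContinuousLinearMap.proj (R := ℝ) (φ := fun _ : Fin 3 => ℝ) k))
              ∘ E) p = (ContinuousLinearMap.proj k).comp (fderiv ℝ E p) :=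
          ((ContinuousLinearMap.proj k).hasFDerivAt.comp p hEd.hasFDerivAt).fderiv
        calc fderiv ℝ E p v k
            = ((ContinuousLinearMap.proj k).comp (fderiv ℝ E p)) v := rfl
          _ = fderiv ℝ ((⇑(ContinuousLinearMap.proj (R := ℝ) (φ := fun _ : Fin 3 => ℝ) k))
              ∘ E) p v := by rw [h]
          _ = fderiv ℝ (fun z => E z k) p v := rfl
      have hBcomp : ∀ k, fderiv ℝ B p v k = fderiv ℝ (fun z => B z k) p v := by
        intro k
        have h : fderiv ℝ ((⇑(ContinuousLinearMap.proj (R := ℝ) (φ := fun _ : Fin 3 => ℝ) k))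
              ∘ B) p = (ContinuousLinearMap.proj k).comp (fderiv ℝ B p) :=
          ((ContinuousLinearMap.proj k).hasFDerivAt.comp p hBd.hasFDerivAt).fderiv
        calc fderiv ℝ B p v k
            = ((ContinuousLinearMap.proj k).comp (fderiv ℝ B p)) v := rfl
          _ = fderiv ℝ ((⇑(ContinuousLinearMap.proj (R := ℝ) (φ := fun _ : Fin 3 => ℝ) k))
              ∘ B) p v := by rw [h]
          _ = fderiv ℝ (fun z => B z k) p v := rfl
      rw [hc.fderiv]
      simp only [ContinuousLinearMap.comp_apply, ContinuousLinearMap.prod_apply]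
      rw [hsplit]
      exact Finset.sum_congr rfl fun k _ => by rw [hEcomp, hBcomp]
    -- dot products
    have hdotgen : ∀ (F G : ℝ × (Fin 3 → ℝ) → (Fin 3 → ℝ)),
        (∀ k, DifferentiableAt ℝ (fun z => F z k) p) →
        (∀ k, DifferentiableAt ℝ (fun z => G z k) p) →
        DifferentiableAt ℝ (fun z => F z ⬝ᵥ G z) p ∧
        ∀ v, fderiv ℝ (fun z => F z ⬝ᵥ G z) p v
          = ∑ k, (fderiv ℝ (fun z => F z k) p v * G p k
              + F p k * fderiv ℝ (fun z => G z k) p v) := by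
      intro F G hF hG
      have h0 : (fun z => F z ⬝ᵥ G z) = fun z => ∑ k, F z k * G z k := rfl
      constructor
      · rw [h0]; exact DifferentiableAt.fun_sum fun k _ => (hF k).mul (hG k)
      · intro v
        rw [h0, fderiv_fun_sum fun k _ => (hF k).fun_mul (hG k)]
        simp only [ContinuousLinearMap.sum_apply]
        exact Finset.sum_congr rfl fun k _ => fd_mul (hF k) (hG k) v
    obtain ⟨hEDd, hEDder⟩ := hdotgen E D hEkd hDk
    obtain ⟨hBHd, hBHder⟩ := hdotgen B H hBkd hHk
    -- cross product term derivative
    have hcross : ∀ (F G : ℝ × (Fin 3 → ℝ) → (Fin 3 → ℝ)),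
        (∀ k, DifferentiableAt ℝ (fun z => F z k) p) →
        (∀ k, DifferentiableAt ℝ (fun z => G z k) p) →
        ∀ (a b c d : Fin 3) v,
        fderiv ℝ (fun z => F z a * G z b - F z c * G z d) p v
          = (fderiv ℝ (fun z => F z a) p v * G p b + F p a * fderiv ℝ (fun z => G z b) p v)
            - (fderiv ℝ (fun z => F z c) p v * G p d
              + F p c * fderiv ℝ (fun z => G z d) p v) := by
      intro F G hF hG a b c d v
      rw [fderiv_fun_sub ((hF a).fun_mul (hG b)) ((hF c).fun_mul (hG d))]
      rw [ContinuousLinearMap.sub_apply, fd_mul (hF a) (hG b) v, fd_mul (hF c) (hG d) v]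
    -- laws in atom form
    have gf0 := hGF p hp 0
    have gf1 := hGF p hp 1
    have gf2 := hGF p hp 2
    have ma0 := hMA p hp 0
    have ma1 := hMA p hp 1
    have ma2 := hMA p hp 2
    have dd := hdivD p hp
    have db := hdivB p hp
    simp only [curl3, Matrix.cons_val_zero, Matrix.cons_val_one, Matrix.head_cons,
      Matrix.cons_val_two, Matrix.tail_cons] at gf0 gf1 gf2 ma0 ma1 ma2
    simp only [Fin.sum_univ_three] at dd db
    constructor
    · -- Poynting
      have h1 : pt (fun z => L (E z, B z) - E z ⬝ᵥ D z) p
          = (∑ k, (fderiv ℝ (fun z => E z k) p (1, 0) * D p k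
              - fderiv ℝ (fun z => B z k) p (1, 0) * H p k))
            - ∑ k, (fderiv ℝ (fun z => E z k) p (1, 0) * D p k
              + E p k * fderiv ℝ (fun z => D z k) p (1, 0)) := by
        simp only [pt]
        rw [fderiv_fun_sub hLc hEDd, ContinuousLinearMap.sub_apply, hLder, hEDder]
      have hc0 : (fun z => crossProduct (H z) (E z) (0 : Fin 3))
          = fun z => H z 1 * E z 2 - H z 2 * E z 1 := by
        funext z; simp [cross_apply]
      have hc1 : (fun z => crossProduct (H z) (E z) (1 : Fin 3))
          = fun z => H z 2 * E z 0 - H z 0 * E z 2 := by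
        funext z; simp [cross_apply]
      have hc2 : (fun z => crossProduct (H z) (E z) (2 : Fin 3))
          = fun z => H z 0 * E z 1 - H z 1 * E z 0 := by
        funext z; simp [cross_apply]
      rw [Fin.sum_univ_three, h1]
      simp only [px, hc0, hc1, hc2]
      rw [hcross H E hHk hEkd 1 2 2 1 _, hcross H E hHk hEkd 2 0 0 2 _,
        hcross H E hHk hEkd 0 1 1 0 _]
      simp only [pt, px, Fin.sum_univ_three] at gf0 gf1 gf2 ma0 ma1 ma2 ⊢
      linear_combination (-(H p 0)) * gf0 + (-(H p 1)) * gf1 + (-(H p 2)) * gf2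
        + (-(E p 0)) * ma0 + (-(E p 1)) * ma1 + (-(E p 2)) * ma2
    · -- momentum
      intro i
      have hAd : DifferentiableAt ℝ (fun z => L (E z, B z) + B z ⬝ᵥ H z) p := hLc.add hBHd
      have hAder : ∀ v, fderiv ℝ (fun z => L (E z, B z) + B z ⬝ᵥ H z) p v
          = (∑ k, (fderiv ℝ (fun z => E z k) p v * D p k
              - fderiv ℝ (fun z => B z k) p v * H p k))
            + ∑ k, (fderiv ℝ (fun z => B z k) p v * H p k
              + B p k * fderiv ℝ (fun z => H z k) p v) := by
        intro v
        rw [fderiv_fun_add hLc hBHd, ContinuousLinearMap.add_apply, hLder, hBHder]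
      have hterm : ∀ (j : Fin 3) v,
          fderiv ℝ (fun z => (L (E z, B z) + B z ⬝ᵥ H z) * (if i = j then 1 else 0)
              - E z i * D z j - H z i * B z j) p v
            = (if i = j then (1:ℝ) else 0)
                * fderiv ℝ (fun z => L (E z, B z) + B z ⬝ᵥ H z) p v
              - (fderiv ℝ (fun z => E z i) p v * D p j
                + E p i * fderiv ℝ (fun z => D z j) p v)
              - (fderiv ℝ (fun z => H z i) p v * B p j
                + H p i * fderiv ℝ (fun z => B z j) p v) := by
        intro j v
        rw [fderiv_fun_sub ((hAd.mul_const _).fun_sub ((hEkd i).fun_mul (hDk j))) ((hHk i).fun_mul (hBkd j)),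
          ContinuousLinearMap.sub_apply,
          fderiv_fun_sub (hAd.mul_const _) ((hEkd i).fun_mul (hDk j)),
          ContinuousLinearMap.sub_apply, fderiv_mul_const hAd,
          fd_mul (hEkd i) (hDk j) v, fd_mul (hHk i) (hBkd j) v]
        simp only [ContinuousLinearMap.coe_smul', Pi.smul_apply, smul_eq_mul]
        try ring
      have hdb0 : (fun z => crossProduct (D z) (B z) (0 : Fin 3))
          = fun z => D z 1 * B z 2 - D z 2 * B z 1 := by
        funext z; simp [cross_apply]
      have hdb1 : (fun z => crossProduct (D z) (B z) (1 : Fin 3))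
          = fun z => D z 2 * B z 0 - D z 0 * B z 2 := by
        funext z; simp [cross_apply]
      have hdb2 : (fun z => crossProduct (D z) (B z) (2 : Fin 3))
          = fun z => D z 0 * B z 1 - D z 1 * B z 0 := by
        funext z; simp [cross_apply]
      simp only [pt, px] at gf0 gf1 gf2 ma0 ma1 ma2 dd db
      fin_cases i
      · simp only [Fin.zero_eta, Fin.mk_one, Fin.reduceFinMk, Fin.reduceEq, reduceIte, mul_one, mul_zero, one_mul, zero_mul] at hterm ⊢
        rw [Fin.sum_univ_three]
        simp only [pt, px]
        rw [hdb0, hcross D B hDk hBkd 1 2 2 1 _]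
        have t0 := hterm 0 ((0 : ℝ), Pi.single 0 1)
        have t1 := hterm 1 ((0 : ℝ), Pi.single 1 1)
        have t2 := hterm 2 ((0 : ℝ), Pi.single 2 1)
        simp only [show ((0:Fin 3) = 0) = (True) from by decide,
          show ((0:Fin 3) = 1) = (False) from by decide,
          show ((0:Fin 3) = 2) = (False) from by decide,
          if_true, if_false, mul_one, mul_zero, zero_sub] at t0 t1 t2 ⊢
        rw [t0, t1, t2]
        simp only [reduceIte, hAder, Fin.sum_univ_three]
        linear_combination (B p 2) * ma1 + (-(B p 1)) * ma2 + (D p 1) * gf2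
          + (-(D p 2)) * gf1 + (-(E p 0)) * dd + (-(H p 0)) * db
      · simp only [Fin.zero_eta, Fin.mk_one, Fin.reduceFinMk, Fin.reduceEq, reduceIte, mul_one, mul_zero, one_mul, zero_mul] at hterm ⊢
        rw [Fin.sum_univ_three]
        simp only [pt, px]
        rw [hdb1, hcross D B hDk hBkd 2 0 0 2 _]
        have t0 := hterm 0 ((0 : ℝ), Pi.single 0 1)
        have t1 := hterm 1 ((0 : ℝ), Pi.single 1 1)
        have t2 := hterm 2 ((0 : ℝ), Pi.single 2 1)
        simp only [show ((1:Fin 3) = 0) = (False) from by decide,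
          show ((1:Fin 3) = 1) = (True) from by decide,
          show ((1:Fin 3) = 2) = (False) from by decide,
          if_true, if_false, mul_one, mul_zero, zero_sub] at t0 t1 t2 ⊢
        rw [t0, t1, t2]
        simp only [reduceIte, hAder, Fin.sum_univ_three]
        linear_combination (B p 0) * ma2 + (-(B p 2)) * ma0 + (D p 2) * gf0
          + (-(D p 0)) * gf2 + (-(E p 1)) * dd + (-(H p 1)) * db
      · simp only [Fin.zero_eta, Fin.mk_one, Fin.reduceFinMk, Fin.reduceEq, reduceIte, mul_one, mul_zero, one_mul, zero_mul] at hterm ⊢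
        rw [Fin.sum_univ_three]
        simp only [pt, px]
        rw [hdb2, hcross D B hDk hBkd 0 1 1 0 _]
        have t0 := hterm 0 ((0 : ℝ), Pi.single 0 1)
        have t1 := hterm 1 ((0 : ℝ), Pi.single 1 1)
        have t2 := hterm 2 ((0 : ℝ), Pi.single 2 1)
        simp only [show ((2:Fin 3) = 0) = (False) from by decide,
          show ((2:Fin 3) = 1) = (False) from by decide,
          show ((2:Fin 3) = 2) = (True) from by decide,
          if_true, if_false, mul_one, mul_zero, zero_sub] at t0 t1 t2 ⊢
        rw [t0, t1, t2]
        simp only [reduceIte, hAder, Fin.sum_univ_three]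
        linear_combination (B p 1) * ma0 + (-(B p 0)) * ma1 + (D p 0) * gf1
          + (-(D p 1)) * gf0 + (-(E p 2)) * dd + (-(H p 2)) * db
  exact ⟨fun p hp => (main p hp).1, fun p hp => (main p hp).2⟩
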